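/- arXiv:1105.5175 — 4 statements merged into one kernel-verified Lean document; each statement's English description precedes it below -/
import Mathlib

section
/- For every integer n ≥ 1, C_{n−1,1} = 8^n · K_n. -/
/-- Takács' sequence `K`: `K 0 = -1/2`,
`K n = ((3n-4)/4)·K (n-1) + ∑_{l=1}^{n-1} K l · K (n-l)` for `n ≥ 1`. -/
def K : ℕ → ℚ
  | 0 => -1/2
  | n + 1 =>
      ((3 * (n + 1 : ℚ) - 4) / 4) * K n +
        ∑ l ∈ (Finset.range n).attach, K (l.1 + 1) * K (n - l.1)
decreasing_by
  all_goals first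
    | exact Nat.lt_succ_self n
    | (have := Finset.mem_range.mp l.2; omega)

/-- The array `C`: `C 0 0 = 1`, out-of-range values are `0`, and otherwise
`C n t = C n (t-1) + (t+2)·C (n-1) (t+2)`. -/
def C : ℕ → ℕ → ℚ
  | 0, 0 => 1
  | 0, t + 1 => C 0 t
  | n + 1, 0 => 2 * C n 2
  | n + 1, t + 1 => C (n + 1) t + ((t + 1 : ℚ) + 2) * C n (t + 3)
termination_by n t => 3 * n + t

lemma C_zero : ∀ t, C 0 t = 1
  | 0 => by rw [C]
  | t + 1 => by rw [C]; exact C_zero t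

lemma C_rec0 (n : ℕ) : C (n + 1) 0 = 2 * C n 2 := by rw [C]

lemma C_rec (n t : ℕ) : C (n + 1) (t + 1) = C (n + 1) t + ((t : ℚ) + 3) * C n (t + 3) := by
  rw [C]; ring_nf

lemma K_succ (n : ℕ) : K (n + 1) = ((3 * ((n : ℚ) + 1) - 4) / 4) * K n +
    ∑ l ∈ Finset.range n, K (l + 1) * K (n - l) := by
  rw [K, Finset.sum_attach (Finset.range n) (fun l => K (l + 1) * K (n - l))]

lemma star : ∀ n t : ℕ, ∑ l ∈ Finset.range (n + 1), C l 1 * C (n - l) t =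
    ((t : ℚ) + 1) * C n (t + 1) + ((t : ℚ) + 2) * C n (t + 2) - (6 * n + 2 * t + 2) * C n t := by
  intro n
  induction n with
  | zero =>
    intro t
    simp [C_zero]
    ring
  | succ m ihm =>
    intro t
    induction t with
    | zero =>
      have hsplit : ∑ l ∈ Finset.range (m + 2), C l 1 * C (m + 1 - l) 0
          = C (m + 1) 1 * C 0 0 + 2 * ∑ l ∈ Finset.range (m + 1), C l 1 * C (m - l) 2 := by
        rw [Finset.sum_range_succ, Finset.mul_sum]
        have h1 : ∀ l ∈ Finset.range (m + 1),
            C l 1 * C (m + 1 - l) 0 = 2 * (C l 1 * C (m - l) 2) := by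
          intro l hl
          have hl' : l < m + 1 := Finset.mem_range.mp hl
          have : m + 1 - l = (m - l) + 1 := by omega
          rw [this, C_rec0]; ring
        rw [Finset.sum_congr rfl h1]
        simp
        ring
      rw [hsplit, ihm 2, C_zero]
      push_cast
      linear_combination (-2 : ℚ) * C_rec m 0 + (-2 : ℚ) * C_rec m 1 + (6 * (m : ℚ) + 6) * C_rec0 m
    | succ t iht =>
      have hstep : ∑ l ∈ Finset.range (m + 2), C l 1 * C (m + 1 - l) (t + 1)
          = ∑ l ∈ Finset.range (m + 2), C l 1 * C (m + 1 - l) t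
            + ((t : ℚ) + 3) * ∑ l ∈ Finset.range (m + 1), C l 1 * C (m - l) (t + 3) := by
        have h1 : ∀ l ∈ Finset.range (m + 1),
            C l 1 * C (m + 1 - l) (t + 1)
              = C l 1 * C (m + 1 - l) t + ((t : ℚ) + 3) * (C l 1 * C (m - l) (t + 3)) := by
          intro l hl
          have hl' : l < m + 1 := Finset.mem_range.mp hl
          have h2 : m + 1 - l = (m - l) + 1 := by omega
          rw [h2, C_rec]; ring
        rw [Finset.sum_range_succ]
        conv_rhs => rw [Finset.sum_range_succ]
        rw [Finset.sum_congr rfl h1, Finset.sum_add_distrib, Finset.mul_sum]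
        simp [C_zero]
        ring
      rw [hstep, iht, ihm (t + 3)]
      have e1 := C_rec m t
      have e2 := C_rec m (t + 1)
      have e3 := C_rec m (t + 2)
      simp only [show t + 1 + 1 = t + 2 by omega, show t + 1 + 3 = t + 4 by omega,
        show t + 2 + 1 = t + 3 by omega, show t + 2 + 3 = t + 5 by omega,
        show t + 3 + 1 = t + 4 by omega, show t + 3 + 2 = t + 5 by omega,
        show t + 1 + 2 = t + 3 by omega] at e1 e2 e3 ⊢
      push_cast at e1 e2 e3 ⊢
      linear_combination (6 * (m : ℚ) + 2 * t + 8) * e1 - ((t : ℚ) + 3) * e2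
        - ((t : ℚ) + 3) * e3

lemma aux : ∀ n : ℕ, C n 1 = 8 ^ (n + 1) * K (n + 1) := by
  intro n
  induction n using Nat.strong_induction_on with
  | _ n ih =>
    match n with
    | 0 =>
      rw [K_succ, K]
      norm_num [C_zero]
    | Nat.succ m =>
      have h1 := K_succ (m + 1)
      push_cast at h1
      have h2 : ∑ l ∈ Finset.range (m + 1), C l 1 * C (m - l) 1
          = 8 ^ (m + 2) * ∑ l ∈ Finset.range (m + 1), K (l + 1) * K (m + 1 - l) := by
        rw [Finset.mul_sum]
        refine Finset.sum_congr rfl (fun l hl => ?_)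
        have hl' : l < m + 1 := Finset.mem_range.mp hl
        rw [ih l (by omega), ih (m - l) (by omega)]
        have h3 : m + 1 - l = (m - l) + 1 := by omega
        rw [h3]
        have h4 : (8 : ℚ) ^ (l + 1) * 8 ^ (m - l + 1) = 8 ^ (m + 2) := by
          rw [← pow_add]; congr 1; omega
        rw [← h4]; ring
      have h3 : ∑ l ∈ Finset.range (m + 1), C l 1 * C (m - l) 1
          = C (m + 1) 1 - (6 * (m : ℚ) + 4) * C m 1 := by
        have hs := star m 1
        have hc : C (m + 1) 1 = 2 * C m 2 + 3 * C m 3 := by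
          rw [C_rec m 0, C_rec0]; norm_num
        rw [hs, hc]
        push_cast
        ring
      have h4 : C m 1 = 8 ^ (m + 1) * K (m + 1) := ih m (by omega)
      show C (m + 1) 1 = 8 ^ (m + 1 + 1) * K (m + 1 + 1)
      linear_combination (-(8 : ℚ) ^ (m + 2)) * h1 + h2 - h3 + (6 * (m : ℚ) + 4) * h4

/-- for every `n ≥ 1`, `C_{n-1,1} = 8^n · K_n`. -/
theorem C_eq_eight_pow_mul_K (n : ℕ) (hn : 1 ≤ n) :
    C (n - 1) 1 = 8 ^ n * K n := by
  obtain ⟨m, rfl⟩ : ∃ m, n = m + 1 := ⟨n - 1, by omega⟩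
  simpa using aux m
end

section
/- Let S be a weighted step set. Define, for each m ≥ 0, the polynomial F_m(q,u) = ∑_w wt(w)·q^{a(w)}·u^{h(w)} (sum over all meanders w of length m) in ℝ[q,u], and for 0 ≤ i ≤ c−1 the polynomial G_{i,m}(q) = ∑_w wt(w)·q^{a(w)} (sum over meanders of length m with final altitude i) in ℝ[q]. Then F_0(q,u) = 1, and for every m ≥ 1 the following identity holds in the Laurent polynomial ring ℝ[q][u,u^{−1}]: F_m(q,u) = S(uq)·F_{m−1}(q,uq) − ∑_{i=0}^{c−1} r_i(uq)·G_{i,m−1}(q), where F_{m−1}(q,uq) denotes F_{m−1} with u replaced by uq, S is the step polynomial evaluated at uq, and r_i(u) = u^i·(s_{−c}u^{−c} + s_{−c+1}u^{−c+1} + … + s_{−(i+1)}u^{−(i+1)}). -/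
open Finset

/-- `ℝ[q,q⁻¹]`, in which `q = T 1`. The generating polynomials below have only
nonnegative powers of `q`, i.e. they lie in the subring `ℝ[q]`. -/
abbrev Aq : Type := LaurentPolynomial ℝ

/-- `ℝ[q,q⁻¹][u,u⁻¹]`, in which `u = T 1`; it contains the ring `ℝ[q][u,u⁻¹]`
in which the stated identity takes place. -/
abbrev Bu : Type := LaurentPolynomial Aq

/-- The monomial `r·q^a·u^h` in `ℝ[q,q⁻¹][u,u⁻¹]`. -/
noncomputable def mono (r : ℝ) (a h : ℤ) : Bu :=
  LaurentPolynomial.C (LaurentPolynomial.C r * LaurentPolynomial.T a) *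
    LaurentPolynomial.T h

/-- The weight of a walk `w₀, …, w_m` of nonnegative integers:
the product of the weights of its steps. -/
noncomputable def wt (s : ℤ → ℝ) {m : ℕ} (w : Fin (m + 1) → ℕ) : ℝ :=
  ∏ i : Fin m, s ((w i.succ : ℤ) - (w i.castSucc : ℤ))

/-- `F_m(q,u) = ∑_w wt(w)·q^{a(w)}·u^{h(w)}`, the sum running over all meanders of
length `m` (walks of nonnegative integers starting at `0`; walks using a step of
weight `0` or a step outside `[-c,d]` contribute weight `0`, and every meander has
heights `≤ m·d`, so the finite index type `Fin (m·d+1)` captures all of them). -/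
noncomputable def Fm (s : ℤ → ℝ) (d m : ℕ) : Bu :=
  ∑ w : Fin (m + 1) → Fin (m * d + 1),
    if w 0 = 0 then
      mono (wt s (fun j => (w j : ℕ))) ((∑ j, (w j : ℕ) : ℕ) : ℤ)
        ((w (Fin.last m) : ℕ) : ℤ)
    else 0

/-- `F_m(q,uq) = ∑_w wt(w)·q^{a(w)+h(w)}·u^{h(w)}`, i.e. `F_m` with `u` replaced
by `uq`. -/
noncomputable def FmSub (s : ℤ → ℝ) (d m : ℕ) : Bu :=
  ∑ w : Fin (m + 1) → Fin (m * d + 1),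
    if w 0 = 0 then
      mono (wt s (fun j => (w j : ℕ)))
        (((∑ j, (w j : ℕ) : ℕ) : ℤ) + ((w (Fin.last m) : ℕ) : ℤ))
        ((w (Fin.last m) : ℕ) : ℤ)
    else 0

/-- `G_{i,m}(q) = ∑_w wt(w)·q^{a(w)}`, the sum running over meanders of length `m`
with final altitude `i`. -/
noncomputable def Gim (s : ℤ → ℝ) (d m i : ℕ) : Aq :=
  ∑ w : Fin (m + 1) → Fin (m * d + 1),
    if w 0 = 0 ∧ (w (Fin.last m) : ℕ) = i then
      LaurentPolynomial.C (wt s (fun j => (w j : ℕ))) *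
        LaurentPolynomial.T ((∑ j, (w j : ℕ) : ℕ) : ℤ)
    else 0

/-- `S(uq) = ∑_{i=-c}^{d} s_i·qⁱ·uⁱ`, the step polynomial evaluated at `uq`. -/
noncomputable def SSub (c d : ℕ) (s : ℤ → ℝ) : Bu :=
  ∑ i ∈ Finset.Icc (-(c : ℤ)) (d : ℤ), mono (s i) i i

/-- `r_i(uq)` where `r_i(u) = uⁱ·(s_{-c}u^{-c} + … + s_{-(i+1)}u^{-(i+1)})
= ∑_{j=i+1}^{c} s_{-j}·u^{i-j}`. -/
noncomputable def rSub (c : ℕ) (s : ℤ → ℝ) (i : ℕ) : Bu :=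
  ∑ j ∈ Finset.Icc ((i : ℤ) + 1) (c : ℤ), mono (s (-j)) ((i : ℤ) - j) ((i : ℤ) - j)

lemma mono_mul (r r' : ℝ) (a h a' h' : ℤ) :
    mono r a h * mono r' a' h' = mono (r * r') (a + a') (h + h') := by
  simp only [mono, LaurentPolynomial.T_add, map_mul]
  ring
@[simp] lemma mono_zero (a h : ℤ) : mono 0 a h = 0 := by simp [mono]
lemma mono_congr {r r' : ℝ} {a h a' h' : ℤ} (h1 : r = r') (h2 : a = a') (h3 : h = h') :
    mono r a h = mono r' a' h' := by rw [h1, h2, h3]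
lemma C_T_mul_mono (x : ℝ) (b : ℤ) (r : ℝ) (a h : ℤ) :
    LaurentPolynomial.C (LaurentPolynomial.C x * LaurentPolynomial.T b) * mono r a h
      = mono (x * r) (b + a) h := by
  have : LaurentPolynomial.C (LaurentPolynomial.C x * LaurentPolynomial.T b)
      = mono x b 0 := by simp [mono]
  rw [this, mono_mul, zero_add]

/-- canonical double-sum form; `P h` is the set of allowed last steps from altitude `h`. -/
noncomputable def canonF (d : ℕ) (s : ℤ → ℝ) (n : ℕ) (P : ℤ → Finset ℤ) : Bu :=
  ∑ v : Fin (n + 1) → Fin (n * d + 1),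
    if v 0 = 0 then
      ∑ k ∈ P ((v (Fin.last n) : ℕ) : ℤ),
        mono (wt s (fun j => (v j : ℕ)) * s k)
          (((∑ j, (v j : ℕ) : ℕ) : ℤ) + ((v (Fin.last n) : ℕ) : ℤ) + k)
          (((v (Fin.last n) : ℕ) : ℤ) + k)
    else 0

lemma canon_split (c d : ℕ) (s : ℤ → ℝ) (n : ℕ) :
    canonF d s n (fun _ => Finset.Icc (-(c : ℤ)) (d : ℤ)) =
      canonF d s n (fun h => (Finset.Icc (-(c : ℤ)) (d : ℤ)).filter (fun k => 0 ≤ h + k)) +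
      canonF d s n (fun h => (Finset.Icc (-(c : ℤ)) (d : ℤ)).filter (fun k => ¬ 0 ≤ h + k)) := by
  unfold canonF
  rw [← Finset.sum_add_distrib]
  refine Finset.sum_congr rfl fun v _ => ?_
  split_ifs
  · rw [Finset.sum_filter_add_sum_filter_not]
  · simp

lemma R1 (c d : ℕ) (s : ℤ → ℝ) (n : ℕ) :
    SSub c d s * FmSub s d n = canonF d s n (fun _ => Finset.Icc (-(c : ℤ)) (d : ℤ)) := by
  unfold SSub FmSub canonF
  rw [Finset.sum_mul_sum]
  rw [Finset.sum_comm]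
  refine Finset.sum_congr rfl fun v _ => ?_
  split_ifs
  · refine Finset.sum_congr rfl fun k _ => ?_
    rw [mono_mul]
    exact mono_congr (mul_comm _ _) (by ring) (by ring)
  · simp

lemma R2 (c d : ℕ) (s : ℤ → ℝ) (n : ℕ) :
    (∑ i ∈ Finset.range c, LaurentPolynomial.C (Gim s d n i) * rSub c s i) =
      canonF d s n
        (fun h => (Finset.Icc (-(c : ℤ)) (d : ℤ)).filter (fun k => ¬ 0 ≤ h + k)) := by
  unfold Gim rSub canonF
  -- expand C of the sum and distribute
  have step1 : ∀ i : ℕ,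
      LaurentPolynomial.C (∑ w : Fin (n + 1) → Fin (n * d + 1),
        if w 0 = 0 ∧ (w (Fin.last n) : ℕ) = i then
          LaurentPolynomial.C (wt s (fun j => (w j : ℕ))) *
            LaurentPolynomial.T ((∑ j, (w j : ℕ) : ℕ) : ℤ)
        else 0) *
        (∑ j ∈ Finset.Icc ((i : ℤ) + 1) (c : ℤ), mono (s (-j)) ((i : ℤ) - j) ((i : ℤ) - j))
      = ∑ w : Fin (n + 1) → Fin (n * d + 1),
          if w 0 = 0 ∧ (w (Fin.last n) : ℕ) = i then
            ∑ j ∈ Finset.Icc ((i : ℤ) + 1) (c : ℤ),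
              mono (wt s (fun j => (w j : ℕ)) * s (-j))
                (((∑ j, (w j : ℕ) : ℕ) : ℤ) + ((i : ℤ) - j)) ((i : ℤ) - j)
          else 0 := by
    intro i
    rw [map_sum, Finset.sum_mul]
    refine Finset.sum_congr rfl fun w _ => ?_
    split_ifs
    · rw [Finset.mul_sum]
      exact Finset.sum_congr rfl fun j _ => C_T_mul_mono _ _ _ _ _
    · simp
  simp only [step1]
  rw [Finset.sum_comm]
  refine Finset.sum_congr rfl fun v _ => ?_
  by_cases h0 : v 0 = 0
  · simp only [h0, true_and, if_pos]
    -- LHS: ∑ i ∈ range c, if (v last : ℕ) = i then ... else 0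
    rw [Finset.sum_ite_eq (Finset.range c) ((v (Fin.last n) : ℕ))]
    by_cases hc : ((v (Fin.last n) : ℕ)) ∈ Finset.range c
    · rw [if_pos hc]
      rw [Finset.mem_range] at hc
      refine Finset.sum_nbij' (fun j => -j) (fun k => -k) ?_ ?_ ?_ ?_ ?_
      · intro j hj
        rw [Finset.mem_Icc] at hj
        simp only [Finset.mem_filter, Finset.mem_Icc]
        omega
      · intro k hk
        simp only [Finset.mem_filter, Finset.mem_Icc] at hk
        simp only [Finset.mem_Icc]
        omega
      · intro j _; ring
      · intro k _; ring
      · intro j _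
        exact mono_congr rfl (by ring) (by ring)
    · rw [if_neg hc]
      rw [Finset.mem_range, not_lt] at hc
      symm
      apply Finset.sum_eq_zero
      intro k hk
      exfalso
      simp only [Finset.mem_filter, Finset.mem_Icc] at hk
      omega
  · simp [h0]

lemma wt_snoc (s : ℤ → ℝ) {m : ℕ} (v : Fin (m + 1) → ℕ) (t : ℕ) :
    wt s (Fin.snoc v t) = wt s v * s ((t : ℤ) - (v (Fin.last m) : ℤ)) := by
  unfold wt
  rw [Fin.prod_univ_castSucc]
  congr 1
  · exact Finset.prod_congr rfl fun i _ => by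
      simp [Fin.succ_castSucc, Fin.snoc_castSucc, -Fin.castSucc_succ]
  · simp [Fin.succ_last, Fin.snoc_last, Fin.snoc_castSucc]

lemma height_bound {c d : ℕ} {s : ℤ → ℝ}
    (hsupp : ∀ i : ℤ, (i < -(c : ℤ) ∨ (d : ℤ) < i) → s i = 0)
    {m : ℕ} (w : Fin (m + 1) → ℕ) (h0 : w 0 = 0) (hwt : wt s w ≠ 0) :
    ∀ j : Fin (m + 1), (w j : ℤ) ≤ (j : ℤ) * d := by
  have hstep : ∀ i : Fin m, ((w i.succ : ℤ) - (w i.castSucc : ℤ)) ≤ d := by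
    intro i
    by_contra hlt
    exact hwt (Finset.prod_eq_zero (Finset.mem_univ i)
      (hsupp _ (Or.inr (by omega))))
  rintro ⟨j, hj⟩
  induction j with
  | zero => simp [show (⟨0, hj⟩ : Fin (m+1)) = 0 from rfl, h0]
  | succ k ih =>
    have hk : k < m := by omega
    have h1 := hstep ⟨k, hk⟩
    have h2 := ih (by omega)
    have e1 : (⟨k, hk⟩ : Fin m).succ = ⟨k + 1, hj⟩ := rfl
    have e2 : (⟨k, hk⟩ : Fin m).castSucc = ⟨k, by omega⟩ := rfl
    rw [e1, e2] at h1
    push_cast at *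
    nlinarith

def castEmb (n M N : ℕ) (h : M ≤ N) : (Fin (n + 1) → Fin M) ↪ (Fin (n + 1) → Fin N) :=
  ⟨fun v j => Fin.castLE h (v j),
   fun a b hab => funext fun j => Fin.castLE_injective h (congrFun hab j)⟩

@[simp] lemma castEmb_apply (n M N : ℕ) (h : M ≤ N) (v : Fin (n + 1) → Fin M) (j : Fin (n + 1)) :
    (castEmb n M N h v) j = Fin.castLE h (v j) := rfl

lemma L (c d : ℕ) (s : ℤ → ℝ)
    (hsupp : ∀ i : ℤ, (i < -(c : ℤ) ∨ (d : ℤ) < i) → s i = 0) (n : ℕ) :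
    Fm s d (n + 1) =
      canonF d s n (fun h => (Finset.Icc (-(c : ℤ)) (d : ℤ)).filter (fun k => 0 ≤ h + k)) := by
  unfold Fm
  rw [← Equiv.sum_comp (Fin.snocEquiv (fun _ => Fin ((n+1)*d+1))), Fintype.sum_prod_type]
  have leg1 : ∀ (t : Fin ((n+1)*d+1)) (v : Fin (n+1) → Fin ((n+1)*d+1)),
      (if (Fin.snocEquiv (fun _ => Fin ((n+1)*d+1))) (t, v) 0 = 0 then
        mono (wt s (fun j => ((Fin.snocEquiv (fun _ => Fin ((n+1)*d+1))) (t, v) j : ℕ)))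
          ((∑ j, ((Fin.snocEquiv (fun _ => Fin ((n+1)*d+1))) (t, v) j : ℕ) : ℕ) : ℤ)
          (((Fin.snocEquiv (fun _ => Fin ((n+1)*d+1))) (t, v) (Fin.last (n+1)) : ℕ) : ℤ)
      else 0)
      = if v 0 = 0 then
          mono (wt s (fun j => (v j : ℕ)) * s ((t : ℕ) - ((v (Fin.last n) : ℕ) : ℤ)))
            (((∑ j, (v j : ℕ) : ℕ) + (t : ℕ) : ℕ) : ℤ)
            (((t : ℕ) : ℤ))
        else 0 := by
    intro t v
    have happ : ∀ j, (Fin.snocEquiv (fun _ => Fin ((n+1)*d+1))) (t, v) j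
        = (Fin.snoc v t : Fin (n+1+1) → Fin ((n+1)*d+1)) j :=
      fun j => rfl
    have hfun : (fun j => (((Fin.snocEquiv (fun _ => Fin ((n+1)*d+1))) (t, v)) j : ℕ))
        = Fin.snoc (fun j => (v j : ℕ)) (t : ℕ) := by
      funext j
      rw [happ]
      exact congrFun (Fin.comp_snoc Fin.val v t) j
    have h0 : (Fin.snocEquiv (fun _ => Fin ((n+1)*d+1))) (t, v) 0 = v 0 := by
      rw [happ, ← Fin.castSucc_zero, Fin.snoc_castSucc]
    have hlast : (Fin.snocEquiv (fun _ => Fin ((n+1)*d+1))) (t, v) (Fin.last (n+1)) = t := by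
      rw [happ, Fin.snoc_last]
    have hsum : (∑ j, (((Fin.snocEquiv (fun _ => Fin ((n+1)*d+1))) (t, v)) j : ℕ))
        = (∑ j, (v j : ℕ)) + (t : ℕ) := by
      rw [show (fun j => (((Fin.snocEquiv (fun _ => Fin ((n+1)*d+1))) (t, v)) j : ℕ)) = _ from hfun]
      exact Fin.sum_snoc _ _
    rw [h0, hsum, hlast, hfun, wt_snoc]
  simp only [leg1]
  rw [Finset.sum_comm]
  unfold canonF
  have hMN : n * d + 1 ≤ (n + 1) * d + 1 := by
    have : (n + 1) * d = n * d + d := by ring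
    omega
  have hzero : ∀ vb : Fin (n + 1) → Fin ((n + 1) * d + 1), vb ∈ Finset.univ →
      vb ∉ Finset.univ.map (castEmb n (n * d + 1) ((n + 1) * d + 1) hMN) →
      (∑ t : Fin ((n + 1) * d + 1), if vb 0 = 0 then
          mono (wt s (fun j => (vb j : ℕ)) * s (((t : ℕ) : ℤ) - ((vb (Fin.last n) : ℕ) : ℤ)))
            (((∑ j, (vb j : ℕ) : ℕ) + (t : ℕ) : ℕ) : ℤ) (((t : ℕ) : ℤ)) else 0) = 0 := by
    intro vb _ hnot
    have hbig : ∃ j, n * d < (vb j : ℕ) := by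
      by_contra hno
      push_neg at hno
      exact hnot (Finset.mem_map.2 ⟨fun j => ⟨(vb j : ℕ), by have := hno j; omega⟩,
        Finset.mem_univ _, funext fun j => Fin.ext rfl⟩)
    obtain ⟨j, hj⟩ := hbig
    apply Finset.sum_eq_zero
    intro t _
    by_cases h0 : vb 0 = 0
    · rw [if_pos h0]
      have hw : wt s (fun j => (vb j : ℕ)) = 0 := by
        by_contra hne
        have hb := height_bound hsupp (fun j => (vb j : ℕ)) (by simp [h0]) hne j
        have hj2 : ((j : ℕ) : ℤ) ≤ (n : ℤ) := by exact_mod_cast Nat.lt_succ_iff.1 j.2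
        have hmul : ((j : ℕ) : ℤ) * d ≤ (n : ℤ) * d :=
          mul_le_mul_of_nonneg_right hj2 (by positivity)
        have hj3 : ((n : ℤ) * d) < ((vb j : ℕ) : ℤ) := by exact_mod_cast hj
        linarith
      rw [hw, zero_mul, mono_zero]
    · rw [if_neg h0]
  rw [← Finset.sum_subset (Finset.subset_univ
      (Finset.univ.map (castEmb n (n * d + 1) ((n + 1) * d + 1) hMN))) hzero,
    Finset.sum_map]
  refine Finset.sum_congr rfl fun v _ => ?_
  simp only [castEmb_apply, Fin.coe_castLE]
  by_cases h0 : v 0 = 0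
  · have h0' : Fin.castLE hMN (v 0) = 0 := by rw [h0]; exact Fin.ext rfl
    simp only [h0', eq_self_iff_true, if_true, if_pos h0]
    have hhb : ((v (Fin.last n) : ℕ) : ℤ) ≤ (n : ℤ) * d := by
      have h2 := (v (Fin.last n)).2
      have : ((v (Fin.last n) : ℕ)) ≤ n * d := by omega
      exact_mod_cast this
    have hz2 : ∀ t : Fin ((n + 1) * d + 1), t ∈ Finset.univ →
        t ∉ Finset.univ.filter (fun t : Fin ((n + 1) * d + 1) =>
          -(c : ℤ) ≤ ((t : ℕ) : ℤ) - ((v (Fin.last n) : ℕ) : ℤ) ∧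
            ((t : ℕ) : ℤ) - ((v (Fin.last n) : ℕ) : ℤ) ≤ (d : ℤ)) →
        mono ((wt s fun j => (v j : ℕ)) * s (((t : ℕ) : ℤ) - ((v (Fin.last n) : ℕ) : ℤ)))
          (((∑ j, (v j : ℕ) : ℕ) + (t : ℕ) : ℕ) : ℤ) (((t : ℕ) : ℤ)) = 0 := by
      intro t _ ht
      simp only [Finset.mem_filter, Finset.mem_univ, true_and, not_and_or, not_le] at ht
      rw [hsupp _ (by omega), mul_zero, mono_zero]
    rw [← Finset.sum_subset (Finset.filter_subset _ _) hz2]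
    have hexp : (n + 1) * d = n * d + d := by ring
    refine Finset.sum_bij' (fun t _ => ((t : ℕ) : ℤ) - ((v (Fin.last n) : ℕ) : ℤ))
      (fun k hk => (⟨((((v (Fin.last n) : ℕ) : ℤ)) + k).toNat, ?_⟩ : Fin ((n + 1) * d + 1)))
      ?_ ?_ ?_ ?_ ?_
    · simp only [Finset.mem_filter, Finset.mem_Icc] at hk
      omega
    · intro t ht
      simp only [Finset.mem_filter, Finset.mem_univ, true_and] at ht
      simp only [Finset.mem_filter, Finset.mem_Icc]
      omega
    · intro k hk
      simp only [Finset.mem_filter, Finset.mem_Icc] at hk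
      simp only [Finset.mem_filter, Finset.mem_univ, true_and]
      omega
    · intro t ht
      simp only [Finset.mem_filter, Finset.mem_univ, true_and] at ht
      refine Fin.ext ?_
      show ((((v (Fin.last n) : ℕ) : ℤ) + (((t : ℕ) : ℤ) - ((v (Fin.last n) : ℕ) : ℤ))).toNat) = (t : ℕ)
      omega
    · intro k hk
      simp only [Finset.mem_filter, Finset.mem_Icc] at hk
      show (((((v (Fin.last n) : ℕ) : ℤ) + k).toNat : ℕ) : ℤ) - ((v (Fin.last n) : ℕ) : ℤ) = k
      omega
    · intro t ht
      refine mono_congr rfl ?_ ?_ <;> push_cast <;> ring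
  · have h0' : ¬ Fin.castLE hMN (v 0) = 0 := by
      intro h
      rw [Fin.ext_iff, Fin.coe_castLE] at h
      exact h0 (Fin.ext (by simpa using h))
    simp only [h0', h0, if_false, Finset.sum_const_zero]

/-- the fundamental functional equation of lattice-path counting:
`F_0(q,u) = 1` and, for `m ≥ 1`,
`F_m(q,u) = S(uq)·F_{m-1}(q,uq) − ∑_{i=0}^{c-1} r_i(uq)·G_{i,m-1}(q)`. -/
theorem fundamental_functional_equation
    (c d : ℕ) (hc : 0 < c) (hd : 0 < d) (s : ℤ → ℝ)
    (hs : ∀ i, 0 ≤ s i) (hsc : 0 < s (-(c : ℤ))) (hsd : 0 < s (d : ℤ))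
    (hsupp : ∀ i : ℤ, (i < -(c : ℤ) ∨ (d : ℤ) < i) → s i = 0) :
    Fm s d 0 = 1 ∧
    ∀ m : ℕ, 1 ≤ m →
      Fm s d m = SSub c d s * FmSub s d (m - 1) -
        ∑ i ∈ Finset.range c,
          LaurentPolynomial.C (Gim s d (m - 1) i) * rSub c s i := by
  constructor
  · haveI : Subsingleton (Fin (0 * d + 1)) :=
      ⟨fun a b => Fin.ext (by have := a.2; have := b.2; omega)⟩
    rw [Fm, Fintype.sum_subsingleton _ (fun _ => (0 : Fin (0 * d + 1)))]
    rw [if_pos rfl]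
    have hwt : wt s (fun j => (((fun _ => (0 : Fin (0 * d + 1))) : Fin (0 + 1) → Fin (0 * d + 1)) j : ℕ)) = 1 := by
      unfold wt; simp
    rw [hwt]
    have hv : ((0 : Fin (0 * d + 1)) : ℕ) = 0 := rfl
    simp [hv, mono]
  · intro m hm
    obtain ⟨n, rfl⟩ : ∃ n, m = n + 1 := ⟨m - 1, (Nat.succ_pred_eq_of_pos hm).symm⟩
    rw [show n + 1 - 1 = n from rfl]
    rw [L c d s hsupp n, R1 c d s n, R2 c d s n, canon_split c d s n]
    ring
end

section
/- Let R be a commutative ring, n ≥ 1, and let p_1, …, p_n be polynomials in one variable over R. Then in the polynomial ring R[x_1,…,x_n] there exists a symmetric polynomial φ such that det (p_j(x_i))_{1 ≤ i,j ≤ n} = ∏_{1 ≤ i < j ≤ n} (x_i − x_j) · φ; that is, the alternating polynomial det(p_j(x_i)) is divisible by the Vandermonde determinant and the quotient is symmetric in x_1,…,x_n. -/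
open MvPolynomial

section Aux

variable {R : Type*} [CommRing R]

private lemma isRegular_of_ringEquiv' {A B : Type*} [CommRing A] [CommRing B] (e : A ≃+* B) {a : A}
    (h : IsRegular (e a)) : IsRegular a := by
  constructor
  · intro x y hxy
    apply e.injective
    apply h.left
    simp only [smul_eq_mul] at hxy ⊢
    rw [← map_mul, ← map_mul, hxy]
  · intro x y hxy
    apply e.injective
    apply h.right
    simp only [smul_eq_mul] at hxy ⊢
    rw [← map_mul, ← map_mul, hxy]

private lemma isRegular_X_sub_X' {σ : Type*} [DecidableEq σ] {i j : σ} (h : i ≠ j) :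
    IsRegular (X i - X j : MvPolynomial σ R) := by
  classical
  let e0 : Option {k : σ // k ≠ i} ≃ σ := Equiv.optionSubtypeNe i
  let e : MvPolynomial σ R ≃+* Polynomial (MvPolynomial {k : σ // k ≠ i} R) :=
    ((renameEquiv R e0.symm).trans (optionEquivLeft R {k : σ // k ≠ i})).toRingEquiv
  apply isRegular_of_ringEquiv' e
  have h1 : e (X i) = Polynomial.X := by
    simp only [e, AlgEquiv.toRingEquiv_eq_coe, AlgEquiv.coe_ringEquiv, AlgEquiv.trans_apply,
      renameEquiv_apply, rename_X, e0, Equiv.optionSubtypeNe_symm_self, optionEquivLeft_X_none]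
  have h2 : e (X j) = Polynomial.C (X ⟨j, h.symm⟩) := by
    simp only [e, AlgEquiv.toRingEquiv_eq_coe, AlgEquiv.coe_ringEquiv, AlgEquiv.trans_apply,
      renameEquiv_apply, rename_X, e0, Equiv.optionSubtypeNe_symm_of_ne h.symm,
      optionEquivLeft_X_some]
  rw [map_sub, h1, h2]
  exact (Polynomial.monic_X_sub_C _).isRegular

private lemma X_sub_X_dvd_of_sub_eq_zero' {σ : Type*} [DecidableEq σ] {i j : σ}
    (f : MvPolynomial σ R)
    (hf : aeval (Function.update X j (X i : MvPolynomial σ R)) f = 0) :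
    (X i - X j : MvPolynomial σ R) ∣ f := by
  classical
  set I : Ideal (MvPolynomial σ R) := Ideal.span {(X j - X i : MvPolynomial σ R)} with hI
  have key : (Ideal.Quotient.mkₐ R I).comp (aeval (Function.update X j (X i))) =
      Ideal.Quotient.mkₐ R I := by
    apply algHom_ext
    intro k
    simp only [AlgHom.comp_apply, aeval_X]
    by_cases hk : k = j
    · subst hk
      rw [Function.update_self]
      simp only [Ideal.Quotient.mkₐ_eq_mk]
      rw [Ideal.Quotient.eq]
      exact Ideal.mem_span_singleton.mpr ⟨-1, by ring⟩
    · rw [Function.update_of_ne hk]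
  have h0 := AlgHom.congr_fun key f
  rw [AlgHom.comp_apply, hf, map_zero] at h0
  have hmem : f ∈ I := by
    rw [← Ideal.Quotient.eq_zero_iff_mem]
    exact h0.symm
  rw [hI, Ideal.mem_span_singleton] at hmem
  exact neg_sub (X j : MvPolynomial σ R) (X i) ▸ neg_dvd.mpr hmem

private lemma prod_X_sub_X_dvd' {n : ℕ} (S : Finset (Fin n × Fin n)) (hS : ∀ p ∈ S, p.1 < p.2)
    (f : MvPolynomial (Fin n) R)
    (hf : ∀ p ∈ S, aeval (Function.update X p.2 (X p.1 : MvPolynomial (Fin n) R)) f = 0) :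
    (∏ p ∈ S, (X p.1 - X p.2 : MvPolynomial (Fin n) R)) ∣ f := by
  classical
  induction S using Finset.strongInduction generalizing f with
  | _ S ih =>
  rcases S.eq_empty_or_nonempty with rfl | hne
  · simp
  obtain ⟨p, hpS, hmin⟩ := S.exists_min_image (fun p => (p.2 : ℕ) * n + (p.1 : ℕ)) hne
  have h1 : (X p.1 - X p.2 : MvPolynomial (Fin n) R) ∣ f :=
    X_sub_X_dvd_of_sub_eq_zero' f (hf p hpS)
  obtain ⟨q, hq⟩ := h1
  have hq0 : ∀ p' ∈ S.erase p,
      aeval (Function.update X p'.2 (X p'.1 : MvPolynomial (Fin n) R)) q = 0 := by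
    intro p' hp'
    have hp'S := Finset.mem_of_mem_erase hp'
    have hne' : p' ≠ p := Finset.ne_of_mem_erase hp'
    have hkey : (p.2 : ℕ) * n + (p.1 : ℕ) ≤ (p'.2 : ℕ) * n + (p'.1 : ℕ) := hmin p' hp'S
    have hv : (p.1 : ℕ) < (p.2 : ℕ) := hS p hpS
    have hv' : (p'.1 : ℕ) < (p'.2 : ℕ) := hS p' hp'S
    have h22 : (p.2 : ℕ) ≤ (p'.2 : ℕ) := by
      by_contra hc
      push_neg at hc
      have hm : ((p'.2 : ℕ) + 1) * n ≤ (p.2 : ℕ) * n := Nat.mul_le_mul_right n hc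
      rw [Nat.add_mul, one_mul] at hm
      have hp'1n : (p'.1 : ℕ) < n := p'.1.isLt
      omega
    have hp1 : p.1 ≠ p'.2 := by
      intro h
      have := congrArg Fin.val h
      omega
    have hfac : ∃ a b : Fin n, a ≠ b ∧
        aeval (Function.update X p'.2 (X p'.1 : MvPolynomial (Fin n) R))
          (X p.1 - X p.2 : MvPolynomial (Fin n) R) = X a - X b := by
      by_cases h2 : p.2 = p'.2
      · refine ⟨p.1, p'.1, ?_, ?_⟩
        · intro h
          exact hne' (Prod.ext h.symm h2.symm)
        · rw [map_sub, aeval_X, aeval_X, Function.update_of_ne hp1, h2, Function.update_self]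
      · exact ⟨p.1, p.2, ne_of_lt (hS p hpS),
          by rw [map_sub, aeval_X, aeval_X, Function.update_of_ne hp1, Function.update_of_ne h2]⟩
    obtain ⟨a, b, hab, hfac⟩ := hfac
    have h0 := hf p' hp'S
    rw [hq, map_mul, hfac] at h0
    exact (isRegular_X_sub_X' hab).left (by simpa using h0)
  have hdvd : (∏ p' ∈ S.erase p, (X p'.1 - X p'.2 : MvPolynomial (Fin n) R)) ∣ q :=
    ih (S.erase p) (Finset.erase_ssubset hpS)
      (fun p' hp' => hS p' (Finset.mem_of_mem_erase hp')) q hq0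
  rw [← Finset.mul_prod_erase S _ hpS, hq]
  exact mul_dvd_mul_left _ hdvd

private lemma prod_pairs_eq' {n : ℕ} (f : Fin n → Fin n → MvPolynomial (Fin n) R) :
    (∏ i : Fin n, ∏ j ∈ Finset.Ioi i, f i j) =
    ∏ q ∈ Finset.univ.filter (fun q : Fin n × Fin n => q.1 < q.2), f q.1 q.2 := by
  rw [Finset.prod_sigma']
  exact Finset.prod_bij (fun x _ => (x.1, x.2))
    (by intro x hx; simp at hx ⊢; simpa using hx)
    (by intro a ha b hb hab; simp at hab; ext <;> simp [hab.1, hab.2])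
    (by intro q hq; simp at hq; exact ⟨⟨q.1, q.2⟩, by simp [hq], rfl⟩)
    (fun _ _ => rfl)

end Aux

/-- for polynomials `p₁, …, pₙ` over a commutative ring `R`, the
alternating polynomial `det (pⱼ(xᵢ))` is divisible by the Vandermonde determinant
`∏_{i<j} (xᵢ - xⱼ)`, with a quotient that is symmetric in `x₁, …, xₙ`. -/
theorem det_eval_eq_vandermonde_mul_symmetric
    (R : Type*) [CommRing R] (n : ℕ) (hn : 1 ≤ n) (p : Fin n → Polynomial R) :
    ∃ φ : MvPolynomial (Fin n) R, φ.IsSymmetric ∧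
      Matrix.det (Matrix.of fun i j : Fin n =>
          Polynomial.aeval (X i : MvPolynomial (Fin n) R) (p j)) =
        (∏ i : Fin n, ∏ j ∈ Finset.Ioi i, (X i - X j : MvPolynomial (Fin n) R)) * φ := by
  classical
  set M : Matrix (Fin n) (Fin n) (MvPolynomial (Fin n) R) :=
    Matrix.of fun i j : Fin n => Polynomial.aeval (X i : MvPolynomial (Fin n) R) (p j) with hM
  set V : MvPolynomial (Fin n) R :=
    ∏ i : Fin n, ∏ j ∈ Finset.Ioi i, (X i - X j : MvPolynomial (Fin n) R) with hV
  set S : Finset (Fin n × Fin n) := Finset.univ.filter (fun q : Fin n × Fin n => q.1 < q.2)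
    with hS
  have hSlt : ∀ q ∈ S, q.1 < q.2 := fun q hq => (Finset.mem_filter.mp hq).2
  -- the determinant vanishes on every diagonal
  have hdiag : ∀ q ∈ S, aeval (Function.update X q.2
      (X q.1 : MvPolynomial (Fin n) R)) M.det = 0 := by
    intro q hq
    have hlt := hSlt q hq
    rw [AlgHom.map_det, AlgHom.mapMatrix_apply]
    apply Matrix.det_zero_of_row_eq (i := q.1) (j := q.2) (ne_of_lt hlt)
    funext k
    simp only [Matrix.map_apply, hM, Matrix.of_apply]
    rw [← Polynomial.aeval_algHom_apply, ← Polynomial.aeval_algHom_apply, aeval_X, aeval_X,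
      Function.update_self, Function.update_of_ne (ne_of_lt hlt)]
  -- divisibility
  have hdvd : V ∣ M.det := by
    rw [hV, prod_pairs_eq' (fun i j => (X i - X j : MvPolynomial (Fin n) R))]
    exact prod_X_sub_X_dvd' S hSlt M.det hdiag
  obtain ⟨φ, hφ⟩ := hdvd
  -- V is regular
  have hVreg : IsRegular V := by
    rw [hV, prod_pairs_eq' (fun i j => (X i - X j : MvPolynomial (Fin n) R))]
    refine Finset.prod_induction _ IsRegular (fun a b => IsRegular.mul) isRegular_one ?_
    exact fun q hq => isRegular_X_sub_X' (ne_of_lt (hSlt q hq))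
  -- alternating properties
  have hsym : φ.IsSymmetric := by
    intro σ
    set ε : MvPolynomial (Fin n) R := ((Equiv.Perm.sign σ : ℤ) : MvPolynomial (Fin n) R) with hε'
    have hε : ε * ε = 1 := by
      rcases Int.units_eq_one_or (Equiv.Perm.sign σ) with h | h <;>
        rw [hε', h] <;> norm_num
    have hD : rename σ M.det = ε * M.det := by
      rw [AlgHom.map_det, AlgHom.mapMatrix_apply]
      have hm : M.map (rename σ) = M.submatrix σ id := by
        ext i j
        simp only [Matrix.map_apply, hM, Matrix.of_apply, Matrix.submatrix_apply, id_eq]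
        rw [← Polynomial.aeval_algHom_apply, rename_X]
      rw [hm, Matrix.det_permute]
    have hW : rename σ (Matrix.det (Matrix.vandermonde fun i => (X i : MvPolynomial (Fin n) R)))
        = ε * Matrix.det (Matrix.vandermonde fun i => (X i : MvPolynomial (Fin n) R)) := by
      rw [AlgHom.map_det, AlgHom.mapMatrix_apply]
      have hm : (Matrix.vandermonde fun i => (X i : MvPolynomial (Fin n) R)).map (rename σ) =
          (Matrix.vandermonde fun i => (X i : MvPolynomial (Fin n) R)).submatrix σ id := by
        ext i j
        simp [Matrix.vandermonde_apply]
      rw [hm, Matrix.det_permute]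
    have hVW : V = (∏ i : Fin n, ∏ j ∈ Finset.Ioi i, (-1 : MvPolynomial (Fin n) R)) *
        Matrix.det (Matrix.vandermonde fun i => (X i : MvPolynomial (Fin n) R)) := by
      rw [hV, Matrix.det_vandermonde, ← Finset.prod_mul_distrib]
      refine Finset.prod_congr rfl fun i _ => ?_
      rw [← Finset.prod_mul_distrib]
      exact Finset.prod_congr rfl fun j _ => by ring
    have hVs : rename σ V = ε * V := by
      rw [hVW, map_mul, hW]
      have hc : rename σ (∏ i : Fin n, ∏ j ∈ Finset.Ioi i, (-1 : MvPolynomial (Fin n) R)) =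
          ∏ i : Fin n, ∏ j ∈ Finset.Ioi i, (-1 : MvPolynomial (Fin n) R) := by
        simp only [map_prod, map_neg, map_one]
      rw [hc]
      ring
    -- conclude
    have h2 : ε * (V * φ) = ε * (V * rename σ φ) := by
      have := congrArg (rename σ) hφ
      rw [map_mul, hD, hVs, hφ] at this
      rw [this]
      ring
    have h3 : V * φ = V * rename σ φ := by
      have := congrArg (fun x => ε * x) h2
      simpa only [← mul_assoc, hε, one_mul] using this
    exact hVreg.left h3.symm
  exact ⟨φ, hsym, hφ⟩
end

section
/- Consider walks with steps ±1 (all weights equal to 1). For m ≥ 0 let B_m(q₊,q₋) = ∑_w q₊^{a⁺(w)} q₋^{a⁻(w)} ∈ ℤ[q₊,q₋], the sum over all bridges w of length m, and let G_m(q) = ∑_w q^{a(w)} ∈ ℤ[q], the sum over all excursions w of length m. Form the power series B(z) = ∑_{m≥0} B_m(q₊,q₋) z^m and G(z,q) = ∑_{m≥0} G_m(q) z^m in (ℤ[q₊,q₋])[[z]]. Then the identity B(z) · (G(z,q₊) + G(z,q₋) − G(z,q₊)·G(z,q₋)) = G(z,q₊) · G(z,q₋) holds in (ℤ[q₊,q₋])[[z]].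 -/
open Finset MvPolynomial

/-- The step `+1` or `-1` encoded by a boolean. -/
def stp (b : Bool) : ℤ := if b then 1 else -1

/-- The altitude `w_i` of the ±1 walk of length `m` encoded by its step
sequence `ε`. -/
def ht {m : ℕ} (ε : Fin m → Bool) (i : ℕ) : ℤ :=
  ∑ j ∈ Finset.range i, if h : j < m then stp (ε ⟨j, h⟩) else 0

/-- The positive area `a⁺(w) = ∑_{i=0}^{m} max(w_i, 0)` of a ±1 walk. -/
def aplus {m : ℕ} (ε : Fin m → Bool) : ℕ :=
  ∑ i ∈ Finset.range (m + 1), (ht ε i).toNat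

/-- The negative area `a⁻(w) = ∑_{i=0}^{m} max(-w_i, 0)` of a ±1 walk. -/
def aminus {m : ℕ} (ε : Fin m → Bool) : ℕ :=
  ∑ i ∈ Finset.range (m + 1), (-(ht ε i)).toNat

/-- The area `a(w) = ∑_{i=0}^{m} w_i` of an excursion (a nonnegative integer). -/
def aexc {m : ℕ} (ε : Fin m → Bool) : ℕ :=
  (∑ i ∈ Finset.range (m + 1), ht ε i).toNat

/-- `B_m(q₊,q₋) = ∑_w q₊^{a⁺(w)} q₋^{a⁻(w)}`, summed over all bridges of length `m`;
here `q₊ = X 0` and `q₋ = X 1` in `ℤ[q₊,q₋]`. -/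
noncomputable def Bm (m : ℕ) : MvPolynomial (Fin 2) ℤ :=
  ∑ ε : Fin m → Bool,
    if ht ε m = 0 then X 0 ^ aplus ε * X 1 ^ aminus ε else 0

/-- `G_m(q) = ∑_w q^{a(w)}`, summed over all excursions of length `m`, with `q`
taken to be the variable `X k` of `ℤ[q₊,q₋]`. -/
noncomputable def Gm (k : Fin 2) (m : ℕ) : MvPolynomial (Fin 2) ℤ :=
  ∑ ε : Fin m → Bool,
    if (∀ i ≤ m, 0 ≤ ht ε i) ∧ ht ε m = 0 then X k ^ aexc ε else 0

-- chunk 1: ht basics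
lemma ht_zero {m : ℕ} (ε : Fin m → Bool) : ht ε 0 = 0 := by simp [ht]

lemma ht_succ {m : ℕ} (ε : Fin m → Bool) {i : ℕ} (h : i < m) :
    ht ε (i + 1) = ht ε i + stp (ε ⟨i, h⟩) := by
  simp [ht, Finset.sum_range_succ, h]

lemma stp_ne_zero (b : Bool) : stp b ≠ 0 := by cases b <;> simp [stp]

lemma stp_abs (b : Bool) : stp b = 1 ∨ stp b = -1 := by cases b <;> simp [stp]

/-- left restriction -/
def wleft {m : ℕ} (ε : Fin m → Bool) (k : ℕ) : Fin k → Bool :=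
  fun i => if h : (i : ℕ) < m then ε ⟨i, h⟩ else true

/-- right restriction -/
def wright {m : ℕ} (ε : Fin m → Bool) (k : ℕ) : Fin (m - k) → Bool :=
  fun i => if h : k + (i : ℕ) < m then ε ⟨k + i, h⟩ else true

/-- concatenation -/
def comb {a b m : ℕ} (h : a + b = m) (ε₁ : Fin a → Bool) (ε₂ : Fin b → Bool) :
    Fin m → Bool :=
  fun j => if hj : (j : ℕ) < a then ε₁ ⟨j, hj⟩ else ε₂ ⟨(j : ℕ) - a, by omega⟩

lemma ht_wleft {m k : ℕ} (ε : Fin m → Bool) (hk : k ≤ m) {i : ℕ} (hi : i ≤ k) :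
    ht (wleft ε k) i = ht ε i := by
  unfold ht
  refine Finset.sum_congr rfl fun j hj => ?_
  rw [Finset.mem_range] at hj
  have h1 : j < k := by omega
  have h2 : j < m := by omega
  simp [h1, h2, wleft]

lemma ht_wright {m k : ℕ} (ε : Fin m → Bool) {i : ℕ} (hi : i ≤ m - k) :
    ht ε k + ht (wright ε k) i = ht ε (k + i) := by
  induction i with
  | zero => simp [ht_zero]
  | succ i ih =>
    have hi' : i ≤ m - k := by omega
    have h1 : i < m - k := by omega
    have h2 : k + i < m := by omega
    have e : k + (i + 1) = (k + i) + 1 := by omega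
    rw [ht_succ (wright ε k) h1, ← add_assoc, ih hi', e, ht_succ ε h2]
    congr 1
    simp [wright, h2]

lemma ht_comb_left {a b m : ℕ} (h : a + b = m) (ε₁ : Fin a → Bool) (ε₂ : Fin b → Bool)
    {i : ℕ} (hi : i ≤ a) : ht (comb h ε₁ ε₂) i = ht ε₁ i := by
  unfold ht
  refine Finset.sum_congr rfl fun j hj => ?_
  rw [Finset.mem_range] at hj
  have h1 : j < a := by omega
  have h2 : j < m := by omega
  simp [h1, h2, comb]

lemma ht_comb_right {a b m : ℕ} (h : a + b = m) (ε₁ : Fin a → Bool) (ε₂ : Fin b → Bool)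
    {i : ℕ} (hi : i ≤ b) : ht (comb h ε₁ ε₂) (a + i) = ht ε₁ a + ht ε₂ i := by
  induction i with
  | zero => simp [ht_zero, ht_comb_left h ε₁ ε₂ (le_refl a)]
  | succ i ih =>
    have hi' : i ≤ b := by omega
    have h1 : i < b := by omega
    have h2 : a + i < m := by omega
    have e : a + (i + 1) = (a + i) + 1 := by omega
    rw [e, ht_succ _ h2, ih hi', ht_succ ε₂ h1, add_assoc]
    congr 2
    have h3 : ¬ ((a + i : ℕ) < a) := by omega
    simp [comb, h3]

lemma comb_wleft_wright {m k : ℕ} (ε : Fin m → Bool) (hk : k ≤ m)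
    (h : k + (m - k) = m) : comb h (wleft ε k) (wright ε k) = ε := by
  funext j
  by_cases hj : (j : ℕ) < k
  · simp [comb, hj, wleft, j.isLt]
  · have h2 : k + ((j : ℕ) - k) < m := by omega
    have h3 : k + ((j : ℕ) - k) = (j : ℕ) := by omega
    simp only [comb, hj, dif_neg, not_false_iff, wright, dif_pos h2]
    congr 1
    exact Fin.ext h3

-- chunk 2
lemma wleft_comb {a b m : ℕ} (h : a + b = m) (ε₁ : Fin a → Bool) (ε₂ : Fin b → Bool) :
    wleft (comb h ε₁ ε₂) a = ε₁ := by
  funext i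
  have h1 : (i : ℕ) < m := by omega
  simp [wleft, comb, h1, i.isLt]

lemma wright_comb {a b m : ℕ} (h : a + b = m) (hb : m - a = b)
    (ε₁ : Fin a → Bool) (ε₂ : Fin b → Bool) :
    wright (comb h ε₁ ε₂) a = fun i : Fin (m - a) => ε₂ ⟨(i : ℕ), by omega⟩ := by
  funext i
  have h1 : a + (i : ℕ) < m := by omega
  have h2 : ¬ (a + (i : ℕ) < a) := by omega
  simp only [wright, dif_pos h1, comb, dif_neg h2]
  congr 1
  exact Fin.ext (by simp)

/-- first return time -/
def fr {m : ℕ} (ε : Fin m → Bool) : ℕ :=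
  Nat.find (p := fun k => (0 < k ∧ ht ε k = 0) ∨ k = m) ⟨m, Or.inr rfl⟩

lemma fr_le {m : ℕ} (ε : Fin m → Bool) : fr ε ≤ m :=
  Nat.find_le (Or.inr rfl)

lemma fr_pos_spec {m : ℕ} (ε : Fin m → Bool) (hm : 0 < m) (h0 : ht ε m = 0) :
    0 < fr ε ∧ ht ε (fr ε) = 0 := by
  have := Nat.find_spec (p := fun k => (0 < k ∧ ht ε k = 0) ∨ k = m)
    ⟨m, Or.inr rfl⟩
  rcases this with h | h
  · exact h
  · rw [show fr ε = m from h]; exact ⟨hm, h0⟩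

lemma fr_min {m : ℕ} (ε : Fin m → Bool) {i : ℕ} (h1 : 0 < i) (h2 : i < fr ε) :
    ht ε i ≠ 0 := by
  have := Nat.find_min (p := fun k => (0 < k ∧ ht ε k = 0) ∨ k = m)
    ⟨m, Or.inr rfl⟩ h2
  intro hz
  exact this (Or.inl ⟨h1, hz⟩)

lemma fr_comb {a b m : ℕ} (h : a + b = m) (ε₁ : Fin a → Bool) (ε₂ : Fin b → Bool)
    (ha : 0 < a) (hz : ht ε₁ a = 0) (hnz : ∀ i, 0 < i → i < a → ht ε₁ i ≠ 0) :
    fr (comb h ε₁ ε₂) = a := by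
  unfold fr
  rw [Nat.find_eq_iff]
  constructor
  · exact Or.inl ⟨ha, by rw [ht_comb_left h ε₁ ε₂ (le_refl a)]; exact hz⟩
  · intro i hi
    rintro (⟨hi0, hiz⟩ | rfl)
    · rw [ht_comb_left h ε₁ ε₂ (le_of_lt hi)] at hiz
      exact hnz i hi0 hi hiz
    · omega

/-- generic area splitting -/
lemma area_comb {a b m : ℕ} (h : a + b = m) (ε₁ : Fin a → Bool) (ε₂ : Fin b → Bool)
    (g : ℤ → ℕ) (hg : g 0 = 0) (hz : ht ε₁ a = 0) :
    ∑ i ∈ Finset.range (m + 1), g (ht (comb h ε₁ ε₂) i) =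
      (∑ i ∈ Finset.range (a + 1), g (ht ε₁ i)) +
      (∑ i ∈ Finset.range (b + 1), g (ht ε₂ i)) := by
  have hm : m + 1 = a + (b + 1) := by omega
  rw [hm, Finset.sum_range_add]
  congr 1
  · rw [Finset.sum_range_succ, hz, hg, add_zero]
    refine Finset.sum_congr rfl fun i hi => ?_
    rw [Finset.mem_range] at hi
    rw [ht_comb_left h ε₁ ε₂ (le_of_lt hi)]
  · refine Finset.sum_congr rfl fun i hi => ?_
    rw [Finset.mem_range] at hi
    rw [ht_comb_right h ε₁ ε₂ (by omega : i ≤ b), hz, zero_add]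

lemma aplus_comb {a b m : ℕ} (h : a + b = m) (ε₁ : Fin a → Bool) (ε₂ : Fin b → Bool)
    (hz : ht ε₁ a = 0) : aplus (comb h ε₁ ε₂) = aplus ε₁ + aplus ε₂ :=
  area_comb h ε₁ ε₂ Int.toNat rfl hz

lemma aminus_comb {a b m : ℕ} (h : a + b = m) (ε₁ : Fin a → Bool) (ε₂ : Fin b → Bool)
    (hz : ht ε₁ a = 0) : aminus (comb h ε₁ ε₂) = aminus ε₁ + aminus ε₂ :=
  area_comb h ε₁ ε₂ (fun x => (-x).toNat) rfl hz

lemma aexc_eq_aplus {m : ℕ} (ε : Fin m → Bool) (h : ∀ i ≤ m, 0 ≤ ht ε i) :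
    aexc ε = aplus ε := by
  unfold aexc aplus
  have : ∑ i ∈ Finset.range (m + 1), ht ε i =
      ((∑ i ∈ Finset.range (m + 1), (ht ε i).toNat : ℕ) : ℤ) := by
    rw [Nat.cast_sum]
    refine Finset.sum_congr rfl fun i hi => ?_
    rw [Finset.mem_range] at hi
    exact (Int.toNat_of_nonneg (h i (by omega))).symm
  rw [this, Int.toNat_natCast]

lemma aminus_eq_zero {m : ℕ} (ε : Fin m → Bool) (h : ∀ i ≤ m, 0 ≤ ht ε i) :
    aminus ε = 0 := by
  unfold aminus
  refine Finset.sum_eq_zero fun i hi => ?_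
  rw [Finset.mem_range] at hi
  have := h i (by omega)
  omega

-- chunk 3: signs and reflection
lemma ht_not {m : ℕ} (ε : Fin m → Bool) (j : ℕ) :
    ht (fun i => !(ε i)) j = - ht ε j := by
  unfold ht
  rw [← Finset.sum_neg_distrib]
  refine Finset.sum_congr rfl fun i hi => ?_
  by_cases h : i < m
  · simp only [dif_pos h]
    cases ε ⟨i, h⟩ <;> simp [stp]
  · simp [dif_neg h]

lemma ht_one {m : ℕ} (ε : Fin m → Bool) (hm : 0 < m) :
    ht ε 1 = stp (ε ⟨0, hm⟩) := by
  simp [ht, Finset.sum_range_one, hm]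

lemma nonneg_walk {a : ℕ} (ε : Fin a → Bool) (hnz : ∀ i, 0 < i → i < a → ht ε i ≠ 0)
    (h1 : 0 ≤ ht ε 1) : ∀ i ≤ a, 0 ≤ ht ε i := by
  intro i
  induction i with
  | zero => intro _; simp [ht_zero]
  | succ i ih =>
    intro hia
    have hia' : i < a := by omega
    have hi0 : 0 ≤ ht ε i := ih (by omega)
    rcases Nat.eq_zero_or_pos i with rfl | hip
    · exact h1
    · have hne : ht ε i ≠ 0 := hnz i hip hia'
      rw [ht_succ ε hia']
      rcases stp_abs (ε ⟨i, hia'⟩) with h | h <;> omega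

lemma sign_persist {a : ℕ} (ε : Fin a → Bool)
    (hnz : ∀ i, 0 < i → i < a → ht ε i ≠ 0) :
    (∀ i ≤ a, 0 ≤ ht ε i) ∨ (∀ i ≤ a, ht ε i ≤ 0) := by
  by_cases h1 : 0 ≤ ht ε 1
  · exact Or.inl (nonneg_walk ε hnz h1)
  · right
    have hnz' : ∀ i, 0 < i → i < a → ht (fun i => !(ε i)) i ≠ 0 := by
      intro i hi ha
      rw [ht_not]
      exact fun hc => hnz i hi ha (by omega)
    have h1' : 0 ≤ ht (fun i => !(ε i)) 1 := by rw [ht_not]; omega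
    intro i hi
    have := nonneg_walk _ hnz' h1' i hi
    rw [ht_not] at this
    omega

lemma aplus_eq_zero {m : ℕ} (ε : Fin m → Bool) (h : ∀ i ≤ m, ht ε i ≤ 0) :
    aplus ε = 0 := by
  unfold aplus
  refine Finset.sum_eq_zero fun i hi => ?_
  rw [Finset.mem_range] at hi
  have := h i (by omega)
  omega

lemma aplus_not {m : ℕ} (ε : Fin m → Bool) : aplus (fun i => !(ε i)) = aminus ε := by
  unfold aplus aminus
  refine Finset.sum_congr rfl fun i _ => ?_
  rw [ht_not]

lemma aminus_not {m : ℕ} (ε : Fin m → Bool) : aminus (fun i => !(ε i)) = aplus ε := by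
  unfold aplus aminus
  refine Finset.sum_congr rfl fun i _ => ?_
  rw [ht_not, neg_neg]

/-- arch polynomial: positive arches of length `n` weighted by `X k ^ area`. -/
noncomputable def Am (k : Fin 2) (n : ℕ) : MvPolynomial (Fin 2) ℤ :=
  ∑ ε : Fin n → Bool,
    if ((∀ i ≤ n, 0 ≤ ht ε i) ∧ ht ε n = 0) ∧ 0 < n ∧ (∀ i < n, 0 < i → ht ε i ≠ 0)
    then X k ^ aexc ε else 0

lemma Am_one_eq (a : ℕ) :
    Am 1 a = ∑ ε : Fin a → Bool,
      if ((∀ i ≤ a, ht ε i ≤ 0) ∧ ht ε a = 0) ∧ 0 < a ∧ (∀ i < a, 0 < i → ht ε i ≠ 0)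
      then X 1 ^ aminus ε else 0 := by
  unfold Am
  refine (Fintype.sum_equiv (Function.Involutive.toPerm (fun ε : Fin a → Bool => fun i => !(ε i))
    (by intro ε; funext i; simp)) _ _ fun ε => ?_).symm
  change _ = if ((∀ i ≤ a, 0 ≤ ht (fun i => !(ε i)) i) ∧ ht (fun i => !(ε i)) a = 0) ∧ 0 < a ∧
      (∀ i < a, 0 < i → ht (fun i => !(ε i)) i ≠ 0) then X 1 ^ aexc (fun i => !(ε i)) else 0
  by_cases hc : ((∀ i ≤ a, ht ε i ≤ 0) ∧ ht ε a = 0) ∧ 0 < a ∧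
      (∀ i < a, 0 < i → ht ε i ≠ 0)
  · rw [if_pos hc, if_pos, aexc_eq_aplus, aplus_not]
    · intro i hi
      rw [ht_not]
      exact neg_nonneg.mpr (hc.1.1 i hi)
    · refine ⟨⟨fun i hi => ?_, ?_⟩, hc.2.1, fun i h1 h2 => ?_⟩
      · rw [ht_not]; exact neg_nonneg.mpr (hc.1.1 i hi)
      · rw [ht_not, hc.1.2, neg_zero]
      · rw [ht_not]
        exact fun hz => hc.2.2 i h1 h2 (by omega)
  · rw [if_neg hc, if_neg]
    intro h
    refine hc ⟨⟨fun i hi => ?_, ?_⟩, h.2.1, fun i h1 h2 => ?_⟩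
    · have := h.1.1 i hi
      rw [ht_not] at this; omega
    · have := h.1.2
      rw [ht_not] at this; omega
    · have := h.2.2 i h1 h2
      rw [ht_not] at this
      exact fun hz => this (by omega)

lemma not_both_signs {a : ℕ} (ε : Fin a → Bool) (hc : ht ε a = 0)
    (ha : 0 < a) (hnz : ∀ i < a, 0 < i → ht ε i ≠ 0)
    (hp : ∀ i ≤ a, 0 ≤ ht ε i) (hn : ∀ i ≤ a, ht ε i ≤ 0) : False := by
  have ha1 : a ≠ 1 := by
    rintro rfl
    have := ht_one ε ha
    rcases stp_abs (ε ⟨0, ha⟩) with h | h <;> rw [h] at this <;> omega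
  have h1a : 1 < a := by omega
  have := hnz 1 h1a one_pos
  have h1 := hp 1 (by omega)
  have h2 := hn 1 (by omega)
  omega

lemma arch_split (a : ℕ) :
    (∑ ε : Fin a → Bool,
      if ht ε a = 0 ∧ 0 < a ∧ (∀ i < a, 0 < i → ht ε i ≠ 0)
      then X 0 ^ aplus ε * X 1 ^ aminus ε else (0 : MvPolynomial (Fin 2) ℤ))
    = Am 0 a + Am 1 a := by
  rw [Am_one_eq]
  unfold Am
  rw [← Finset.sum_add_distrib]
  refine Finset.sum_congr rfl fun ε _ => ?_
  by_cases hc : ht ε a = 0 ∧ 0 < a ∧ (∀ i < a, 0 < i → ht ε i ≠ 0)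
  · rw [if_pos hc]
    rcases sign_persist ε (fun i h1 h2 => hc.2.2 i h2 h1) with hp | hn
    · have hnneg : ¬ (∀ i ≤ a, ht ε i ≤ 0) :=
        fun hn => not_both_signs ε hc.1 hc.2.1 hc.2.2 hp hn
      rw [if_pos ⟨⟨hp, hc.1⟩, hc.2⟩, if_neg (fun h => hnneg h.1.1),
        aexc_eq_aplus ε hp, aminus_eq_zero ε hp, pow_zero, mul_one, add_zero]
    · have hnpos : ¬ (∀ i ≤ a, 0 ≤ ht ε i) :=
        fun hp => not_both_signs ε hc.1 hc.2.1 hc.2.2 hp hn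
      rw [if_neg (fun h => hnpos h.1.1), if_pos ⟨⟨hn, hc.1⟩, hc.2⟩,
        aplus_eq_zero ε hn, pow_zero, one_mul, zero_add]
  · rw [if_neg hc, if_neg (fun h => hc ⟨h.1.2, h.2⟩), if_neg (fun h => hc ⟨h.1.2, h.2⟩),
      add_zero]

-- chunk 4: core decomposition
lemma wright_comb' {m k : ℕ} (hp : k + (m - k) = m) (ε₁ : Fin k → Bool)
    (ε₂ : Fin (m - k) → Bool) : wright (comb hp ε₁ ε₂) k = ε₂ := by
  funext i
  have h1 : k + (i : ℕ) < m := by omega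
  have h2 : ¬ (k + (i : ℕ) < k) := by omega
  simp only [wright, dif_pos h1, comb, dif_neg h2]
  congr 1
  exact Fin.ext (by simp)

lemma decomp_core {m : ℕ} (hm : 0 < m)
    (F : ∀ n, (Fin n → Bool) → Prop) [∀ n, DecidablePred (F n)]
    (A : ∀ n, (Fin n → Bool) → Prop) [∀ n, DecidablePred (A n)]
    (w : ∀ n, (Fin n → Bool) → MvPolynomial (Fin 2) ℤ)
    (hA : ∀ n ε, A n ε → 0 < n ∧ ht ε n = 0 ∧ ∀ i, 0 < i → i < n → ht ε i ≠ 0)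
    (hsplit : ∀ ε : Fin m → Bool, F m ε →
      A (fr ε) (wleft ε (fr ε)) ∧ F (m - fr ε) (wright ε (fr ε)))
    (hcomb : ∀ (a b : ℕ) (hp : a + b = m) (ε₁ : Fin a → Bool) (ε₂ : Fin b → Bool),
      A a ε₁ → F b ε₂ → F m (comb hp ε₁ ε₂))
    (hw : ∀ (a b : ℕ) (hp : a + b = m) (ε₁ : Fin a → Bool) (ε₂ : Fin b → Bool),
      A a ε₁ → F b ε₂ → w m (comb hp ε₁ ε₂) = w a ε₁ * w b ε₂) :
    (∑ ε : Fin m → Bool, if F m ε then w m ε else 0) =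
      ∑ p ∈ antidiagonal m,
        (∑ ε₁ : Fin p.1 → Bool, if A p.1 ε₁ then w p.1 ε₁ else 0) *
        (∑ ε₂ : Fin p.2 → Bool, if F p.2 ε₂ then w p.2 ε₂ else 0) := by
  rw [Finset.Nat.sum_antidiagonal_eq_sum_range_succ_mk]
  have step : ∀ k ∈ Finset.range (m + 1),
      (∑ ε₁ : Fin (k, m - k).1 → Bool, if A (k, m - k).1 ε₁ then w (k, m - k).1 ε₁ else 0) *
      (∑ ε₂ : Fin (k, m - k).2 → Bool, if F (k, m - k).2 ε₂ then w (k, m - k).2 ε₂ else 0) =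
      ∑ x ∈ (Finset.univ.filter (fun ε₁ : Fin k → Bool => A k ε₁)) ×ˢ
          (Finset.univ.filter (fun ε₂ : Fin (m - k) → Bool => F (m - k) ε₂)),
        w k x.1 * w (m - k) x.2 := by
    intro k _
    rw [Finset.sum_product, ← Finset.sum_mul_sum, ← Finset.sum_filter, ← Finset.sum_filter]
  rw [Finset.sum_congr rfl step, ← Finset.sum_filter]
  have main : (∑ ε ∈ Finset.univ.filter (fun ε : Fin m → Bool => F m ε), w m ε) =
      ∑ x ∈ (Finset.range (m + 1)).sigma
        (fun k => (Finset.univ.filter (fun ε₁ : Fin k → Bool => A k ε₁)) ×ˢ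
          (Finset.univ.filter (fun ε₂ : Fin (m - k) → Bool => F (m - k) ε₂))),
        w x.1 x.2.1 * w (m - x.1) x.2.2 := by
    refine Finset.sum_bij'
      (fun ε _ => (⟨fr ε, (wleft ε (fr ε), wright ε (fr ε))⟩ :
          Σ k : ℕ, (Fin k → Bool) × (Fin (m - k) → Bool)))
      (fun x hx => comb
        (by
          have := (Finset.mem_sigma.mp hx).1
          rw [Finset.mem_range] at this
          omega : x.1 + (m - x.1) = m) x.2.1 x.2.2)
      ?_ ?_ ?_ ?_ ?_
    · -- hi
      intro ε hε
      beta_reduce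
      rw [Finset.mem_filter] at hε
      have hsp := hsplit ε hε.2
      rw [Finset.mem_sigma, Finset.mem_range, Finset.mem_product, Finset.mem_filter,
        Finset.mem_filter]
      exact ⟨Nat.lt_succ_of_le (fr_le ε), ⟨Finset.mem_univ _, hsp.1⟩, ⟨Finset.mem_univ _, hsp.2⟩⟩
    · -- hj
      intro x hx
      rw [Finset.mem_sigma, Finset.mem_product, Finset.mem_filter, Finset.mem_filter] at hx
      rw [Finset.mem_filter]
      exact ⟨Finset.mem_univ _, hcomb _ _ _ _ _ hx.2.1.2 hx.2.2.2⟩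
    · -- left_inv
      intro ε hε
      exact comb_wleft_wright ε (fr_le ε) _
    · -- right_inv
      rintro ⟨k, ε₁, ε₂⟩ hx
      rw [Finset.mem_sigma, Finset.mem_product, Finset.mem_filter, Finset.mem_filter] at hx
      beta_reduce
      have hA₁ := hA _ _ hx.2.1.2
      have hfr : fr (comb (show k + (m - k) = m by
          have h9 : k < m + 1 := Finset.mem_range.mp hx.1; omega) ε₁ ε₂) = k :=
        fr_comb _ ε₁ ε₂ hA₁.1 hA₁.2.1 hA₁.2.2
      rw [hfr]
      congr 1
      exact Prod.ext (wleft_comb _ ε₁ ε₂) (wright_comb' _ ε₁ ε₂)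
    · -- weights
      intro ε hε
      rw [Finset.mem_filter] at hε
      have hsp := hsplit ε hε.2
      have hp : fr ε + (m - fr ε) = m := by have := fr_le ε; omega
      calc w m ε = w m (comb hp (wleft ε (fr ε)) (wright ε (fr ε))) := by
              rw [comb_wleft_wright ε (fr_le ε) hp]
        _ = w (fr ε) (wleft ε (fr ε)) * w (m - fr ε) (wright ε (fr ε)) :=
              hw _ _ hp _ _ hsp.1 hsp.2
  rw [main, Finset.sum_sigma]

-- chunk 5: the two functional equations
lemma G_eq (k : Fin 2) :
    PowerSeries.mk (Gm k) = 1 + PowerSeries.mk (Am k) * PowerSeries.mk (Gm k) := by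
  refine PowerSeries.ext fun n => ?_
  rw [map_add, PowerSeries.coeff_mul, PowerSeries.coeff_one]
  simp only [PowerSeries.coeff_mk]
  rcases Nat.eq_zero_or_pos n with rfl | hn
  · have h1 : Gm k 0 = 1 := by
      rw [Gm]
      rw [Fintype.sum_eq_single (fun i : Fin 0 => true)]
      · rw [if_pos, aexc]
        · norm_num [ht_zero]
        · exact ⟨fun i hi => by interval_cases i; simp [ht_zero], by simp [ht_zero]⟩
      · intro x hx
        exact absurd (funext fun i => i.elim0) hx
    have h2 : Am k 0 = 0 := by
      rw [Am]
      refine Finset.sum_eq_zero fun ε _ => if_neg fun h => by omega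
    simp [h1, h2, Finset.Nat.antidiagonal_zero]
  · have key := decomp_core (m := n) hn
      (fun n ε => (∀ i ≤ n, 0 ≤ ht ε i) ∧ ht ε n = 0)
      (fun n ε => ((∀ i ≤ n, 0 ≤ ht ε i) ∧ ht ε n = 0) ∧ 0 < n ∧
        (∀ i < n, 0 < i → ht ε i ≠ 0))
      (fun n ε => X k ^ aexc ε)
      (fun n ε h => ⟨h.2.1, h.1.2, fun i h1 h2 => h.2.2 i h2 h1⟩)
      ?_ ?_ ?_
    · have hz : (if n = 0 then (1 : MvPolynomial (Fin 2) ℤ) else 0) = 0 := if_neg (by omega)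
      rw [hz, zero_add]
      simpa only [Gm, Am] using key
    · -- hsplit
      intro ε hF
      beta_reduce at hF
      obtain ⟨hpos, hz⟩ := hF
      obtain ⟨hfp, hfz⟩ := fr_pos_spec ε hn hz
      have hfle := fr_le ε
      refine ⟨⟨⟨fun i hi => ?_, ?_⟩, hfp, fun i h2 h1 => ?_⟩, fun i hi => ?_, ?_⟩ <;> beta_reduce
      · rw [ht_wleft ε hfle hi]; exact hpos i (le_trans hi hfle)
      · rw [ht_wleft ε hfle (le_refl _)]; exact hfz
      · rw [ht_wleft ε hfle (le_of_lt h2)]; exact fr_min ε h1 h2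
      · have h3 := ht_wright ε (k := fr ε) hi
        rw [hfz, zero_add] at h3
        rw [h3]; exact hpos _ (by omega)
      · have h3 := ht_wright ε (k := fr ε) (le_refl (n - fr ε))
        rw [hfz, zero_add] at h3
        rw [h3]
        have h4 : fr ε + (n - fr ε) = n := by omega
        rw [h4]; exact hz
    · -- hcomb
      intro a b hp ε₁ ε₂ hA1 hF2
      beta_reduce at hA1 hF2 ⊢
      refine ⟨fun i hi => ?_, ?_⟩
      · by_cases hia : i ≤ a
        · rw [ht_comb_left hp ε₁ ε₂ hia]; exact hA1.1.1 i hia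
        · have h4 : a + (i - a) = i := by omega
          rw [← h4, ht_comb_right hp ε₁ ε₂ (by omega : i - a ≤ b), hA1.1.2, zero_add]
          exact hF2.1 _ (by omega)
      · have h5 := ht_comb_right hp ε₁ ε₂ (le_refl b)
        rw [hp] at h5
        rw [h5, hA1.1.2, zero_add]
        exact hF2.2
    · -- hw
      intro a b hp ε₁ ε₂ hA1 hF2
      beta_reduce at hA1 hF2 ⊢
      have hnn : ∀ i ≤ n, 0 ≤ ht (comb hp ε₁ ε₂) i := by
        intro i hi
        by_cases hia : i ≤ a
        · rw [ht_comb_left hp ε₁ ε₂ hia]; exact hA1.1.1 i hia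
        · have h4 : a + (i - a) = i := by omega
          rw [← h4, ht_comb_right hp ε₁ ε₂ (by omega : i - a ≤ b), hA1.1.2, zero_add]
          exact hF2.1 _ (by omega)
      rw [aexc_eq_aplus _ hnn, aplus_comb hp ε₁ ε₂ hA1.1.2,
        aexc_eq_aplus _ hA1.1.1, aexc_eq_aplus _ hF2.1, pow_add]

lemma B_eq :
    PowerSeries.mk Bm = 1 +
      (PowerSeries.mk (Am 0) + PowerSeries.mk (Am 1)) * PowerSeries.mk Bm := by
  refine PowerSeries.ext fun n => ?_
  rw [map_add, PowerSeries.coeff_mul, PowerSeries.coeff_one]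
  simp only [PowerSeries.coeff_mk, map_add]
  rcases Nat.eq_zero_or_pos n with rfl | hn
  · have h1 : Bm 0 = 1 := by
      rw [Bm]
      rw [Fintype.sum_eq_single (fun i : Fin 0 => true)]
      · rw [if_pos (by simp [ht_zero]), aplus, aminus]
        norm_num [ht_zero]
      · intro x hx
        exact absurd (funext fun i => i.elim0) hx
    have h2 : ∀ k : Fin 2, Am k 0 = 0 := fun k => by
      rw [Am]
      refine Finset.sum_eq_zero fun ε _ => if_neg fun h => by omega
    simp [h1, h2, Finset.Nat.antidiagonal_zero]
  · have key := decomp_core (m := n) hn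
      (fun n ε => ht ε n = 0)
      (fun n ε => ht ε n = 0 ∧ 0 < n ∧ (∀ i < n, 0 < i → ht ε i ≠ 0))
      (fun n ε => X 0 ^ aplus ε * X 1 ^ aminus ε)
      (fun n ε h => ⟨h.2.1, h.1, fun i h1 h2 => h.2.2 i h2 h1⟩)
      ?_ ?_ ?_
    · have hz : (if n = 0 then (1 : MvPolynomial (Fin 2) ℤ) else 0) = 0 := if_neg (by omega)
      rw [hz, zero_add]
      have key2 : ∀ p ∈ antidiagonal n,
          (∑ ε₁ : Fin p.1 → Bool,
            if ht ε₁ p.1 = 0 ∧ 0 < p.1 ∧ (∀ i < p.1, 0 < i → ht ε₁ i ≠ 0)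
            then X 0 ^ aplus ε₁ * X 1 ^ aminus ε₁ else 0) *
          (∑ ε₂ : Fin p.2 → Bool, if ht ε₂ p.2 = 0
            then X 0 ^ aplus ε₂ * X 1 ^ aminus ε₂ else 0) =
          (Am 0 p.1 + Am 1 p.1) * Bm p.2 := by
        intro p _
        rw [arch_split, Bm]
      rw [Bm]
      exact key.trans (Finset.sum_congr rfl key2)
    · -- hsplit
      intro ε hz
      beta_reduce at hz
      obtain ⟨hfp, hfz⟩ := fr_pos_spec ε hn hz
      have hfle := fr_le ε
      refine ⟨⟨?_, hfp, fun i h2 h1 => ?_⟩, ?_⟩ <;> beta_reduce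
      · rw [ht_wleft ε hfle (le_refl _)]; exact hfz
      · rw [ht_wleft ε hfle (le_of_lt h2)]; exact fr_min ε h1 h2
      · have h3 := ht_wright ε (k := fr ε) (le_refl (n - fr ε))
        rw [hfz, zero_add] at h3
        rw [h3]
        have h4 : fr ε + (n - fr ε) = n := by omega
        rw [h4]; exact hz
    · -- hcomb
      intro a b hp ε₁ ε₂ hA1 hF2
      beta_reduce at hA1 hF2 ⊢
      have h5 := ht_comb_right hp ε₁ ε₂ (le_refl b)
      rw [hp] at h5
      rw [h5, hA1.1, zero_add]
      exact hF2
    · -- hw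
      intro a b hp ε₁ ε₂ hA1 hF2
      beta_reduce at hA1 hF2 ⊢
      rw [aplus_comb hp ε₁ ε₂ hA1.1, aminus_comb hp ε₁ ε₂ hA1.1, pow_add, pow_add]
      ring

/-- the bridge decomposition identity
`B(z)·(G(z,q₊) + G(z,q₋) − G(z,q₊)·G(z,q₋)) = G(z,q₊)·G(z,q₋)`
in `(ℤ[q₊,q₋])[[z]]`. -/
theorem bridge_decomposition :
    PowerSeries.mk Bm *
      (PowerSeries.mk (Gm 0) + PowerSeries.mk (Gm 1) -
        PowerSeries.mk (Gm 0) * PowerSeries.mk (Gm 1)) =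
    PowerSeries.mk (Gm 0) * PowerSeries.mk (Gm 1) := by
  have h0 := G_eq 0
  have h1 := G_eq 1
  have hB := B_eq
  linear_combination (PowerSeries.mk (Gm 0) * PowerSeries.mk (Gm 1)) * hB -
    (PowerSeries.mk Bm * PowerSeries.mk (Gm 0)) * h1 -
    (PowerSeries.mk Bm * PowerSeries.mk (Gm 1)) * h0
end
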